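/- arXiv:1607.04310 — 2 statements merged into one kernel-verified Lean document; each statement's English description precedes it below -/
import Mathlib

section
/- Let G be a topological group, H a closed subgroup, and I a normal subgroup of G. Let X = G/H with base point x₀ = eH, let F be the closure in X of the I-orbit of x₀, and let J be the closure in G of the set I·H. Then J is a subgroup of G contained in the stabilizer Stab_G(F) = {g ∈ G : g·F = F}. -/
open Pointwise

/-- Let `G` be a topological group, `H` a closed subgroup, and `I` a
normal subgroup of `G`.  Let `X = G/H` with base point `x₀ = eH`, let `F` be the closure
in `X` of the `I`-orbit of `x₀`, and let `J` be the closure in `G` of the set `I·H`.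
Then `J` is a subgroup of `G` contained in the stabilizer `{g : g • F = F}`. -/
theorem stmt0 {G : Type*} [Group G] [TopologicalSpace G] [IsTopologicalGroup G]
    (H I : Subgroup G) (hH : IsClosed (H : Set G)) [I.Normal]
    (x₀ : G ⧸ H) (hx₀ : x₀ = QuotientGroup.mk 1)
    (F : Set (G ⧸ H)) (hF : F = closure ((fun i : G => i • x₀) '' (I : Set G)))
    (Jset : Set G) (hJ : Jset = closure ((I : Set G) * (H : Set G))) :
    ∃ J : Subgroup G, (J : Set G) = Jset ∧ ∀ g ∈ J, g • F = F := by
  refine ⟨(I ⊔ H).topologicalClosure, ?_, ?_⟩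
  · rw [hJ, ← Subgroup.normal_mul I H]; rfl
  -- key: mk ⁻¹' F = Jset
  have himg : (fun i : G => i • x₀) '' (I : Set G) = QuotientGroup.mk '' (I : Set G) := by
    subst hx₀
    ext y; constructor
    · rintro ⟨i, hi, rfl⟩; exact ⟨i, hi, by simp⟩
    · rintro ⟨i, hi, rfl⟩; exact ⟨i, hi, by simp⟩
  have hpre : (QuotientGroup.mk : G → G ⧸ H) ⁻¹' (QuotientGroup.mk '' (I : Set G))
      = (I : Set G) * (H : Set G) := by
    ext x; constructor
    · rintro ⟨i, hi, hix⟩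
      have : i⁻¹ * x ∈ H := QuotientGroup.eq.mp hix
      exact ⟨i, hi, i⁻¹ * x, this, by group⟩
    · rintro ⟨i, hi, h, hh, rfl⟩
      exact ⟨i, hi, (QuotientGroup.eq.mpr (by simpa using hh)).symm⟩
  have hkey : (QuotientGroup.mk : G → G ⧸ H) ⁻¹' F = Jset := by
    rw [hF, himg, QuotientGroup.isOpenMap_coe.preimage_closure_eq_closure_preimage
      continuous_quotient_mk', hpre, hJ]
  have hJgrp : ∀ g ∈ (I ⊔ H).topologicalClosure, g • F ⊆ F := by
    intro g hg y hy
    obtain ⟨x, hx, rfl⟩ := hy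
    obtain ⟨a, rfl⟩ := QuotientGroup.mk_surjective x
    have ha : a ∈ (I ⊔ H).topologicalClosure := by
      have : a ∈ Jset := hkey ▸ hx
      rwa [hJ, ← Subgroup.normal_mul I H] at this
    have : g * a ∈ (I ⊔ H).topologicalClosure := mul_mem hg ha
    have : g * a ∈ (QuotientGroup.mk : G → G ⧸ H) ⁻¹' F := by
      rw [hkey, hJ, ← Subgroup.normal_mul I H]; exact this
    exact this
  intro g hg
  apply subset_antisymm (hJgrp g hg)
  intro x hx
  refine ⟨g⁻¹ • x, hJgrp g⁻¹ (inv_mem hg) ⟨x, hx, rfl⟩, by simp⟩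
end

section
/- Let G be a connected complex Lie group and H a closed complex subgroup. Define J := {g ∈ G : f(gH) = f(eH) for all holomorphic functions f on G/H}. Then J is a closed complex subgroup of G containing H. -/
open scoped Manifold

private def stmt11Set (E : Type*) [NormedAddCommGroup E] [NormedSpace ℂ E]
    {G : Type*} [TopologicalSpace G] [ChartedSpace E G] [Group G]
    (H : Subgroup G) : Set G :=
  {g : G | ∀ f : G → ℂ, MDifferentiable 𝓘(ℂ, E) 𝓘(ℂ) f →
      (∀ (a : G), ∀ h ∈ H, f (a * h) = f a) → f g = f 1}

/-- Let `G` be a connected complex Lie group and `H` a closed complex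
subgroup.  Identifying the holomorphic functions on `G/H` with the right `H`-invariant
holomorphic functions on `G`, define
`J := {g ∈ G : f(gH) = f(eH) for all f ∈ 𝒪(G/H)}`.
Then `J` is a closed subgroup of `G` containing `H`. -/
theorem stmt11 {E : Type*} [NormedAddCommGroup E] [NormedSpace ℂ E]
    {G : Type*} [TopologicalSpace G] [ChartedSpace E G] [Group G]
    [IsTopologicalGroup G] [LieGroup 𝓘(ℂ, E) (⊤ : ℕ∞) G] [ConnectedSpace G]
    (H : Subgroup G) (hH : IsClosed (H : Set G)) :
    ∃ J : Subgroup G,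
      (J : Set G) = {g : G | ∀ f : G → ℂ, MDifferentiable 𝓘(ℂ, E) 𝓘(ℂ) f →
          (∀ (a : G), ∀ h ∈ H, f (a * h) = f a) → f g = f 1}
        ∧ IsClosed (J : Set G) ∧ H ≤ J := by
  have mul_mem' : ∀ {a b : G}, a ∈ stmt11Set E H → b ∈ stmt11Set E H →
      a * b ∈ stmt11Set E H := by
    intro a b ha hb f hf hinv
    have hf' : MDifferentiable 𝓘(ℂ, E) 𝓘(ℂ) (fun x => f (a * x)) :=
      hf.comp ((contMDiff_mul_left (n := ((⊤ : ℕ∞) : WithTop ℕ∞)) (a := a)).mdifferentiable (by simp))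
    have hinv' : ∀ (c : G), ∀ h ∈ H, f (a * (c * h)) = f (a * c) := by
      intro c h hh
      rw [← mul_assoc]
      exact hinv (a * c) h hh
    have h1 := hb (fun x => f (a * x)) hf' hinv'
    simp only [mul_one] at h1
    exact h1.trans (ha f hf hinv)
  have inv_mem' : ∀ {a : G}, a ∈ stmt11Set E H → a⁻¹ ∈ stmt11Set E H := by
    intro a ha f hf hinv
    have hf' : MDifferentiable 𝓘(ℂ, E) 𝓘(ℂ) (fun x => f (a⁻¹ * x)) :=
      hf.comp ((contMDiff_mul_left (n := ((⊤ : ℕ∞) : WithTop ℕ∞)) (a := a⁻¹)).mdifferentiable (by simp))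
    have hinv' : ∀ (c : G), ∀ h ∈ H, f (a⁻¹ * (c * h)) = f (a⁻¹ * c) := by
      intro c h hh
      rw [← mul_assoc]
      exact hinv (a⁻¹ * c) h hh
    have h1 := ha (fun x => f (a⁻¹ * x)) hf' hinv'
    simp only [inv_mul_cancel, mul_one] at h1
    exact h1.symm
  refine ⟨⟨⟨⟨stmt11Set E H, fun {a b} => mul_mem'⟩, fun f _ _ => rfl⟩,
      fun {a} => inv_mem'⟩, rfl, ?_, ?_⟩
  · have heq : stmt11Set E H =
        ⋂ (f : G → ℂ), ⋂ (_ : MDifferentiable 𝓘(ℂ, E) 𝓘(ℂ) f),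
          ⋂ (_ : ∀ (a : G), ∀ h ∈ H, f (a * h) = f a), {g : G | f g = f 1} := by
      ext g; simp [stmt11Set, Set.mem_iInter]
    show IsClosed (stmt11Set E H)
    rw [heq]
    exact isClosed_iInter fun f => isClosed_iInter fun hf => isClosed_iInter fun _ =>
      isClosed_eq hf.continuous continuous_const
  · intro h hh f _ hinv
    simpa using hinv 1 h hh
end
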